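/- Let $R$ be a commutative ring, $a, h \in R$, $\mathcal{A} = R[X]/(X^2-hX-a)$, with $\Delta$ as in the universal Frobenius system: $\Delta(1) = 1\otimes X + X\otimes 1 - h\,1\otimes 1$, $\Delta(X) = X\otimes X + a\,1\otimes 1$. Then $\Delta$ is a map of $\mathcal{A}$-bimodules: $\Delta(xy) = (x \otimes 1)\Delta(y) = \Delta(x)(1 \otimes y)$ for all $x, y \in \mathcal{A}$. -/

import Mathlib

set_option maxHeartbeats 1000000

open Polynomial
open scoped TensorProduct

set_option maxHeartbeats 8000000 in
/-- The comultiplication `Δ` of the universal Frobenius system on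
`𝒜 = R[X]/(X² - hX - a)` is a map of `𝒜`-bimodules:
`Δ(xy) = (x ⊗ 1)Δ(y) = Δ(x)(1 ⊗ y)`. -/
theorem stmt_12 (R : Type) [CommRing R] (a h : R)
    (Δ : AdjoinRoot (X ^ 2 - C h * X - C a) →ₗ[R]
      AdjoinRoot (X ^ 2 - C h * X - C a) ⊗[R] AdjoinRoot (X ^ 2 - C h * X - C a))
    (hΔ1 : Δ 1 = 1 ⊗ₜ[R] AdjoinRoot.root (X ^ 2 - C h * X - C a) +
      AdjoinRoot.root (X ^ 2 - C h * X - C a) ⊗ₜ[R] 1 - h • (1 ⊗ₜ[R] 1))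
    (hΔX : Δ (AdjoinRoot.root (X ^ 2 - C h * X - C a)) =
      AdjoinRoot.root (X ^ 2 - C h * X - C a) ⊗ₜ[R]
        AdjoinRoot.root (X ^ 2 - C h * X - C a) + a • (1 ⊗ₜ[R] 1)) :
    ∀ x y : AdjoinRoot (X ^ 2 - C h * X - C a),
      Δ (x * y) = (x ⊗ₜ[R] 1) * Δ y ∧ Δ (x * y) = Δ x * (1 ⊗ₜ[R] y) := by
  set r := AdjoinRoot.root (X ^ 2 - C h * X - C a : R[X]) with hrdef
  have hm : (X ^ 2 - C h * X - C a : R[X]).Monic := by monicity!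
  have hr2 : r * r = h • r + a • (1 : AdjoinRoot (X ^ 2 - C h * X - C a : R[X])) := by
    have h0 : AdjoinRoot.mk (X ^ 2 - C h * X - C a : R[X]) (X ^ 2 - C h * X - C a : R[X]) = 0 := AdjoinRoot.mk_self
    rw [map_sub, map_sub, map_mul, map_pow, AdjoinRoot.mk_X, AdjoinRoot.mk_C,
      AdjoinRoot.mk_C] at h0
    rw [Algebra.smul_def, Algebra.smul_def, mul_one, AdjoinRoot.algebraMap_eq]
    linear_combination h0
  have hrep : ∀ z : AdjoinRoot (X ^ 2 - C h * X - C a : R[X]), ∃ c0 c1 : R, z = c0 • (1 : AdjoinRoot (X ^ 2 - C h * X - C a : R[X])) + c1 • r := by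
    intro z
    rcases subsingleton_or_nontrivial R with hs | hn
    · haveI := Module.subsingleton R (AdjoinRoot (X ^ 2 - C h * X - C a : R[X]))
      exact ⟨0, 0, Subsingleton.elim _ _⟩
    obtain ⟨p, rfl⟩ := AdjoinRoot.mk_surjective z
    have hmk : AdjoinRoot.mk (X ^ 2 - C h * X - C a : R[X]) p = AdjoinRoot.mk (X ^ 2 - C h * X - C a : R[X]) (p %ₘ (X ^ 2 - C h * X - C a : R[X])) := by
      rw [AdjoinRoot.mk_eq_mk, Polynomial.modByMonic_eq_sub_mul_div _ (X ^ 2 - C h * X - C a : R[X]), sub_sub_cancel]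
      exact dvd_mul_right _ _
    by_cases h0 : p %ₘ (X ^ 2 - C h * X - C a : R[X]) = 0
    · exact ⟨0, 0, by simp [hmk, h0]⟩
    · have hnd : (p %ₘ (X ^ 2 - C h * X - C a : R[X])).natDegree ≤ 1 := by
        have h1 : (p %ₘ (X ^ 2 - C h * X - C a : R[X])).degree < (X ^ 2 - C h * X - C a : R[X]).degree := Polynomial.degree_modByMonic_lt p hm
        have h2 : (X ^ 2 - C h * X - C a : R[X]).natDegree ≤ 2 := by compute_degree
        have := Polynomial.natDegree_lt_natDegree h0 h1
        omega
      refine ⟨(p %ₘ (X ^ 2 - C h * X - C a : R[X])).coeff 0, (p %ₘ (X ^ 2 - C h * X - C a : R[X])).coeff 1, ?_⟩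
      rw [hmk]
      conv_lhs => rw [Polynomial.eq_X_add_C_of_natDegree_le_one hnd]
      rw [map_add, map_mul, AdjoinRoot.mk_X, AdjoinRoot.mk_C, AdjoinRoot.mk_C]
      rw [Algebra.smul_def, Algebra.smul_def, mul_one, AdjoinRoot.algebraMap_eq]
      ring
  have hΔr2 : Δ (r * r) = h • Δ r + a • Δ 1 := by
    rw [hr2, map_add, map_smul, map_smul]
  have G1 : Δ ((1 : AdjoinRoot (X ^ 2 - C h * X - C a : R[X])) * 1) = ((1 : AdjoinRoot (X ^ 2 - C h * X - C a : R[X])) ⊗ₜ[R] (1 : AdjoinRoot (X ^ 2 - C h * X - C a : R[X]))) * Δ 1 := by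
    rw [one_mul, hΔ1]
    simp only [mul_sub, mul_add, mul_smul_comm, Algebra.TensorProduct.tmul_mul_tmul,
      one_mul, mul_one]
  have G1' : Δ ((1 : AdjoinRoot (X ^ 2 - C h * X - C a : R[X])) * 1) = Δ 1 * ((1 : AdjoinRoot (X ^ 2 - C h * X - C a : R[X])) ⊗ₜ[R] (1 : AdjoinRoot (X ^ 2 - C h * X - C a : R[X]))) := by
    rw [one_mul, hΔ1]
    simp only [sub_mul, add_mul, smul_mul_assoc, Algebra.TensorProduct.tmul_mul_tmul,
      one_mul, mul_one]
  have G2 : Δ ((1 : AdjoinRoot (X ^ 2 - C h * X - C a : R[X])) * r) = ((1 : AdjoinRoot (X ^ 2 - C h * X - C a : R[X])) ⊗ₜ[R] (1 : AdjoinRoot (X ^ 2 - C h * X - C a : R[X]))) * Δ r := by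
    rw [one_mul, hΔX]
    simp only [mul_add, mul_smul_comm, Algebra.TensorProduct.tmul_mul_tmul,
      one_mul, mul_one]
  have G2' : Δ (r * (1 : AdjoinRoot (X ^ 2 - C h * X - C a : R[X]))) = Δ r * ((1 : AdjoinRoot (X ^ 2 - C h * X - C a : R[X])) ⊗ₜ[R] (1 : AdjoinRoot (X ^ 2 - C h * X - C a : R[X]))) := by
    rw [mul_one, hΔX]
    simp only [add_mul, smul_mul_assoc, Algebra.TensorProduct.tmul_mul_tmul,
      one_mul, mul_one]
  have G3 : Δ (r * (1 : AdjoinRoot (X ^ 2 - C h * X - C a : R[X]))) = (r ⊗ₜ[R] (1 : AdjoinRoot (X ^ 2 - C h * X - C a : R[X]))) * Δ 1 := by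
    rw [mul_one, hΔ1, hΔX]
    simp only [mul_sub, mul_add, Algebra.TensorProduct.tmul_mul_tmul, one_mul, mul_one,
      mul_smul_comm, hr2, TensorProduct.add_tmul, TensorProduct.smul_tmul']
    simp only [← TensorProduct.smul_tmul', TensorProduct.tmul_smul, smul_smul]
    module
  have G3' : Δ ((1 : AdjoinRoot (X ^ 2 - C h * X - C a : R[X])) * r) = Δ 1 * ((1 : AdjoinRoot (X ^ 2 - C h * X - C a : R[X])) ⊗ₜ[R] r) := by
    rw [one_mul, hΔ1, hΔX]
    simp only [sub_mul, add_mul, Algebra.TensorProduct.tmul_mul_tmul, one_mul, mul_one,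
      smul_mul_assoc, hr2, TensorProduct.tmul_add, TensorProduct.smul_tmul', TensorProduct.smul_tmul]
    simp only [← TensorProduct.smul_tmul', TensorProduct.tmul_smul, smul_smul]
    module
  have G4 : Δ (r * r) = (r ⊗ₜ[R] (1 : AdjoinRoot (X ^ 2 - C h * X - C a : R[X]))) * Δ r := by
    rw [hΔr2, hΔ1, hΔX]
    simp only [mul_add, Algebra.TensorProduct.tmul_mul_tmul, one_mul, mul_one,
      mul_smul_comm, hr2, TensorProduct.add_tmul, TensorProduct.smul_tmul']
    simp only [smul_add, smul_sub, TensorProduct.smul_tmul']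
    simp only [← TensorProduct.smul_tmul', TensorProduct.tmul_smul, smul_smul]
    module
  have G4' : Δ (r * r) = Δ r * ((1 : AdjoinRoot (X ^ 2 - C h * X - C a : R[X])) ⊗ₜ[R] r) := by
    rw [hΔr2, hΔ1, hΔX]
    simp only [add_mul, Algebra.TensorProduct.tmul_mul_tmul, one_mul, mul_one,
      smul_mul_assoc, hr2, TensorProduct.tmul_add, TensorProduct.smul_tmul', TensorProduct.smul_tmul]
    simp only [smul_add, smul_sub, TensorProduct.smul_tmul', TensorProduct.smul_tmul]
    simp only [← TensorProduct.smul_tmul', TensorProduct.tmul_smul, smul_smul]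
    module
  intro x y
  obtain ⟨c0, c1, rfl⟩ := hrep x
  obtain ⟨d0, d1, rfl⟩ := hrep y
  have hL : Δ ((c0 • (1 : AdjoinRoot (X ^ 2 - C h * X - C a : R[X])) + c1 • r) * (d0 • 1 + d1 • r))
      = (c0 * d0) • Δ ((1 : AdjoinRoot (X ^ 2 - C h * X - C a : R[X])) * 1) + (c0 * d1) • Δ ((1 : AdjoinRoot (X ^ 2 - C h * X - C a : R[X])) * r)
        + (c1 * d0) • Δ (r * (1 : AdjoinRoot (X ^ 2 - C h * X - C a : R[X]))) + (c1 * d1) • Δ (r * r) := by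
    simp only [add_mul, mul_add, smul_mul_smul_comm, map_add, map_smul]
    abel
  constructor
  · rw [hL, G1, G2, G3, G4]
    have hR : ((c0 • (1 : AdjoinRoot (X ^ 2 - C h * X - C a : R[X])) + c1 • r) ⊗ₜ[R] (1 : AdjoinRoot (X ^ 2 - C h * X - C a : R[X]))) * Δ (d0 • 1 + d1 • r)
        = (c0 * d0) • (((1 : AdjoinRoot (X ^ 2 - C h * X - C a : R[X])) ⊗ₜ[R] (1 : AdjoinRoot (X ^ 2 - C h * X - C a : R[X]))) * Δ 1)
          + (c0 * d1) • (((1 : AdjoinRoot (X ^ 2 - C h * X - C a : R[X])) ⊗ₜ[R] (1 : AdjoinRoot (X ^ 2 - C h * X - C a : R[X]))) * Δ r)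
          + (c1 * d0) • ((r ⊗ₜ[R] (1 : AdjoinRoot (X ^ 2 - C h * X - C a : R[X]))) * Δ 1)
          + (c1 * d1) • ((r ⊗ₜ[R] (1 : AdjoinRoot (X ^ 2 - C h * X - C a : R[X]))) * Δ r) := by
      rw [map_add, map_smul, map_smul]
      simp only [TensorProduct.add_tmul, ← TensorProduct.smul_tmul']
      simp only [add_mul, mul_add, smul_mul_smul_comm]
      abel
    rw [hR]
  · rw [hL, G1', G2', G3', G4']
    have hR : Δ (c0 • (1 : AdjoinRoot (X ^ 2 - C h * X - C a : R[X])) + c1 • r) * ((1 : AdjoinRoot (X ^ 2 - C h * X - C a : R[X])) ⊗ₜ[R] (d0 • (1 : AdjoinRoot (X ^ 2 - C h * X - C a : R[X])) + d1 • r))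
        = (c0 * d0) • (Δ 1 * ((1 : AdjoinRoot (X ^ 2 - C h * X - C a : R[X])) ⊗ₜ[R] (1 : AdjoinRoot (X ^ 2 - C h * X - C a : R[X]))))
          + (c0 * d1) • (Δ 1 * ((1 : AdjoinRoot (X ^ 2 - C h * X - C a : R[X])) ⊗ₜ[R] r))
          + (c1 * d0) • (Δ r * ((1 : AdjoinRoot (X ^ 2 - C h * X - C a : R[X])) ⊗ₜ[R] (1 : AdjoinRoot (X ^ 2 - C h * X - C a : R[X]))))
          + (c1 * d1) • (Δ r * ((1 : AdjoinRoot (X ^ 2 - C h * X - C a : R[X])) ⊗ₜ[R] r)) := by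
      rw [map_add, map_smul, map_smul]
      simp only [TensorProduct.tmul_add, TensorProduct.tmul_smul]
      simp only [add_mul, mul_add, smul_mul_smul_comm, mul_smul_comm, smul_mul_assoc]
      module
    rw [hR]
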